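/- Let 0 < ε < 1 and n ≥ 2 a natural number, and let F = (1 − ε)/(1 − εⁿ) (the fidelity of the exponentially decaying global Pauli noise model). Then (1 − ε)/(1 − εⁿ − (1 − ε)ε) ≥ 1 − 2ε², i.e., removing the weight-1 error mass gives output fidelity at least 1 − 2ε². -/
import Mathlib

theorem global_noise_quadratic_reduction (ε : ℝ) (n : ℕ) (h0 : 0 < ε) (h1 : ε < 1)
    (hn : 2 ≤ n) :
    (1 - ε) / (1 - ε ^ n - (1 - ε) * ε) ≥ 1 - 2 * ε ^ 2 := by
  have hεn : ε ^ n ≤ ε ^ 2 := pow_le_pow_of_le_one h0.le h1.le hn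
  have hεn0 : 0 < ε ^ n := pow_pos h0 n
  have hD : 0 < 1 - ε ^ n - (1 - ε) * ε := by nlinarith
  rw [ge_iff_le, le_div_iff₀ hD]
  nlinarith [sq_nonneg ε, sq_nonneg (1 - ε), mul_pos hεn0 h0, sq_nonneg (ε^n - ε^2), mul_nonneg (sq_nonneg ε) (sub_nonneg.2 hεn)]
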